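/- Let M ∈ ℝ^{n×n} be a real symmetric matrix, let μ be an eigenvalue of M, and let P_μ ∈ ℝ^{n×n} be the matrix (in the standard basis) of the orthogonal projection of ℝⁿ onto the eigenspace {v : M v = μ v}. If c is a stable δ-MC-WL coloring for M, then c refines P_μ; that is, for all index pairs, c(i,j) = c(p,q) implies (P_μ)_{ij} = (P_μ)_{pq}. -/

import Mathlib

open Polynomial Module.End

/-- The multiset aggregated in the δ-MC-WL update for index pair `(i, j)`:
`{{(c(i,u), M_{uj}) : u, M_{uj} ≠ 0}} + {{(c(u,j), M_{iu}) : u, M_{iu} ≠ 0}}`. -/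
noncomputable def deltaMCWLMultiset {n : ℕ} {Γ : Type*} (c : Fin n × Fin n → Γ)
    (M : Matrix (Fin n) (Fin n) ℝ) (i j : Fin n) : Multiset (Γ × ℝ) :=
  (Finset.univ.filter (fun u => M u j ≠ 0)).val.map (fun u => (c (i, u), M u j)) +
  (Finset.univ.filter (fun u => M i u ≠ 0)).val.map (fun u => (c (u, j), M i u))

/-- `c` is a stable δ-MC-WL coloring for `M`. -/
def IsStableDeltaMCWL {n : ℕ} {Γ : Type*} (c : Fin n × Fin n → Γ)
    (M : Matrix (Fin n) (Fin n) ℝ) : Prop :=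
  ∀ i j p q : Fin n, c (i, j) = c (p, q) →
    M i j = M p q ∧ (i = j ↔ p = q) ∧
      deltaMCWLMultiset c M i j = deltaMCWLMultiset c M p q

/-- The coloring `c` refines the matrix `A`. -/
def Refines {n : ℕ} {Γ : Type*} (c : Fin n × Fin n → Γ)
    (A : Matrix (Fin n) (Fin n) ℝ) : Prop :=
  ∀ i j p q : Fin n, c (i, j) = c (p, q) → A i j = A p q

theorem refines_pow {n : ℕ} {Γ : Type*} (c : Fin n × Fin n → Γ)
    (M : Matrix (Fin n) (Fin n) ℝ) (hc : IsStableDeltaMCWL c M) (k : ℕ) :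
    Refines c (M ^ k) := by
  classical
  induction k with
  | zero =>
    intro i j p q h
    obtain ⟨-, hiff, -⟩ := hc i j p q h
    by_cases hij : i = j
    · simp [Matrix.one_apply, hij, hiff.mp hij]
    · have hpq : ¬ p = q := fun hpq => hij (hiff.mpr hpq)
      simp [Matrix.one_apply, hij, hpq]
  | succ k ih =>
    intro i j p q h
    set F : Γ × ℝ → ℝ := fun x => x.2 *
      (if h : ∃ uv : Fin n × Fin n, c uv = x.1 then (M ^ k) h.choose.1 h.choose.2 else 0)
      with hFdef
    have hFval : ∀ (u v : Fin n) (m : ℝ), F (c (u, v), m) = m * (M ^ k) u v := by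
      intro u v m
      have hex : ∃ uv : Fin n × Fin n, c uv = c (u, v) := ⟨(u, v), rfl⟩
      simp only [hFdef, dif_pos hex]
      congr 1
      exact ih hex.choose.1 hex.choose.2 u v (by rw [Prod.mk.eta]; exact hex.choose_spec)
    have hsum : ∀ a b : Fin n, ((deltaMCWLMultiset c M a b).map F).sum
        = 2 * (M ^ (k + 1)) a b := by
      intro a b
      unfold deltaMCWLMultiset
      rw [Multiset.map_add, Multiset.sum_add, Multiset.map_map, Multiset.map_map]
      have h1 : ((Finset.univ.filter (fun u => M u b ≠ 0)).val.map
          (F ∘ fun u => (c (a, u), M u b))).sum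
          = ∑ u ∈ Finset.univ.filter (fun u => M u b ≠ 0), M u b * (M ^ k) a u := by
        rw [Finset.sum_eq_multiset_sum]
        congr 1
        apply Multiset.map_congr rfl
        intro u _
        exact hFval a u (M u b)
      have h2 : ((Finset.univ.filter (fun u => M a u ≠ 0)).val.map
          (F ∘ fun u => (c (u, b), M a u))).sum
          = ∑ u ∈ Finset.univ.filter (fun u => M a u ≠ 0), M a u * (M ^ k) u b := by
        rw [Finset.sum_eq_multiset_sum]
        congr 1
        apply Multiset.map_congr rfl
        intro u _
        exact hFval u b (M a u)
      rw [h1, h2]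
      rw [Finset.sum_filter_of_ne (fun u _ hu => by
        intro h0; exact hu (by rw [h0, zero_mul])),
        Finset.sum_filter_of_ne (fun u _ hu => by
        intro h0; exact hu (by rw [h0, zero_mul]))]
      have e1 : ∑ u, M u b * (M ^ k) a u = (M ^ (k + 1)) a b := by
        rw [show M ^ (k + 1) = M ^ k * M from pow_succ M k, Matrix.mul_apply]
        exact Finset.sum_congr rfl fun u _ => mul_comm _ _
      have e2 : ∑ u, M a u * (M ^ k) u b = (M ^ (k + 1)) a b := by
        rw [show M ^ (k + 1) = M * M ^ k from (pow_succ' M k), Matrix.mul_apply]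
      rw [e1, e2]; ring
    obtain ⟨-, -, hmult⟩ := hc i j p q h
    have := congrArg (fun m => (Multiset.map F m).sum) hmult
    simp only [hsum] at this
    linarith


theorem toEuclideanLin_pow (M : Matrix (Fin n) (Fin n) ℝ) (k : ℕ) :
    Matrix.toEuclideanLin (M ^ k) = (Matrix.toEuclideanLin M) ^ k := by
  induction k with
  | zero => simp [Matrix.toEuclideanLin_eq_toLin, Matrix.toLin_one]; rfl
  | succ k ih =>
    rw [pow_succ, pow_succ, ← ih]
    simp [Matrix.toEuclideanLin_eq_toLin, Matrix.toLin_mul _ (PiLp.basisFun 2 ℝ (Fin n)) _]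
    rfl

theorem toEuclideanLin_aeval (M : Matrix (Fin n) (Fin n) ℝ) (p : ℝ[X]) :
    Matrix.toEuclideanLin (aeval M p) = aeval (Matrix.toEuclideanLin M) p := by
  induction p using Polynomial.induction_on' with
  | add p q hp hq => simp [map_add, hp, hq]
  | monomial k a =>
    simp [aeval_monomial, Algebra.algebraMap_eq_smul_one, map_smul, map_mul, smul_mul_assoc,
      one_mul, toEuclideanLin_pow, map_pow]

theorem aeval_apply_eigen {E : Type*} [NormedAddCommGroup E] [InnerProductSpace ℝ E]
    (T : E →ₗ[ℝ] E) (ν : ℝ) (v : E) (hv : v ∈ eigenspace T ν) (p : ℝ[X]) :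
    (aeval T p) v = p.eval ν • v := by
  induction p using Polynomial.induction_on' with
  | add p q hp hq => simp [map_add, LinearMap.add_apply, hp, hq, add_smul]
  | monomial k a =>
    have hk : ∀ m : ℕ, (T ^ m) v = ν ^ m • v := by
      intro m
      induction m with
      | zero => simp
      | succ m ih =>
        rw [pow_succ, pow_succ, Module.End.mul_apply, mem_eigenspace_iff.mp hv,
          map_smul, ih, smul_smul, mul_comm ν]
    simp [aeval_monomial, Algebra.algebraMap_eq_smul_one, Module.End.mul_apply, hk,
      smul_smul, eval_monomial]

theorem proj_eq_aeval {n : ℕ} (T : EuclideanSpace ℝ (Fin n) →ₗ[ℝ] EuclideanSpace ℝ (Fin n))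
    (hT : T.IsSymmetric) (μ : ℝ) (hμ : Module.End.HasEigenvalue T μ) :
    ∃ p : ℝ[X], (aeval T p) =
      (((eigenspace T μ).subtypeL.comp (Submodule.orthogonalProjectionOnto (eigenspace T μ))).toLinearMap) := by
  classical
  set s : Finset ℝ :=
    (Finset.univ.image (fun ν : Module.End.Eigenvalues T => (ν : ℝ))).erase μ with hs
  refine ⟨∏ l ∈ s, (Polynomial.C (μ - l)⁻¹ * (Polynomial.X - Polynomial.C l)), ?_⟩
  have hevalμ : (∏ l ∈ s, (Polynomial.C (μ - l)⁻¹ * (Polynomial.X - Polynomial.C l))).eval μ = 1 := by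
    rw [Polynomial.eval_prod]
    apply Finset.prod_eq_one
    intro l hl
    have : l ≠ μ := Finset.ne_of_mem_erase hl
    simp only [Polynomial.eval_mul, Polynomial.eval_C, Polynomial.eval_sub, Polynomial.eval_X]
    exact inv_mul_cancel₀ (sub_ne_zero.mpr (Ne.symm this))
  have hevalν : ∀ ν : Module.End.Eigenvalues T, (ν : ℝ) ≠ μ →
      (∏ l ∈ s, (Polynomial.C (μ - l)⁻¹ * (Polynomial.X - Polynomial.C l))).eval (ν : ℝ) = 0 := by
    intro ν hν
    rw [Polynomial.eval_prod]
    apply Finset.prod_eq_zero (i := (ν : ℝ))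
    · exact Finset.mem_erase.mpr ⟨hν, Finset.mem_image.mpr ⟨ν, Finset.mem_univ _, rfl⟩⟩
    · simp
  have htop : (⨆ ν : Module.End.Eigenvalues T, eigenspace T ν) = ⊤ :=
    Submodule.orthogonal_eq_bot_iff.mp hT.orthogonalComplement_iSup_eigenspaces_eq_bot'
  apply LinearMap.ext
  intro v
  have hv : v ∈ ⨆ ν : Module.End.Eigenvalues T, eigenspace T ν := htop ▸ Submodule.mem_top
  refine Submodule.iSup_induction' (motive := fun x _ =>
      (aeval T (∏ l ∈ s, (Polynomial.C (μ - l)⁻¹ * (Polynomial.X - Polynomial.C l)))) x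
      = (((eigenspace T μ).subtypeL.comp (Submodule.orthogonalProjectionOnto (eigenspace T μ))).toLinearMap) x)
      _ ?_ ?_ ?_ hv
  · intro ν x hx
    rw [aeval_apply_eigen T (ν : ℝ) x hx]
    by_cases hνμ : (ν : ℝ) = μ
    · rw [hνμ] at hx ⊢
      rw [hevalμ, one_smul]
      simp [ContinuousLinearMap.coe_comp, Submodule.starProjection_eq_self_iff.mpr hx]
    · rw [hevalν ν hνμ, zero_smul]
      have hxo : x ∈ (eigenspace T μ)ᗮ := by
        intro w hw
        exact hT.orthogonalFamily_eigenspaces (fun h => hνμ h.symm) ⟨w, hw⟩ ⟨x, hx⟩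
      simp [ContinuousLinearMap.coe_comp,
        Submodule.orthogonalProjectionOnto_apply_of_mem_orthogonal hxo]
  · simp
  · intro x y _ _ hx hy
    simp only [map_add, hx, hy]


theorem refines_aeval {n : ℕ} {Γ : Type*} (c : Fin n × Fin n → Γ)
    (M : Matrix (Fin n) (Fin n) ℝ) (hc : IsStableDeltaMCWL c M) (f : ℝ[X]) :
    Refines c (aeval M f) := by
  intro i j p q h
  rw [Polynomial.aeval_eq_sum_range]
  simp only [Matrix.sum_apply, Matrix.smul_apply, smul_eq_mul]
  exact Finset.sum_congr rfl fun k _ => by rw [refines_pow c M hc k i j p q h]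

/-- If `c` is a stable δ-MC-WL coloring for a real symmetric matrix `M`,
`μ` is an eigenvalue of `M`, and `P` is the matrix (in the standard basis) of the orthogonal
projection of `ℝⁿ` onto the eigenspace of `μ`, then `c` refines `P`. -/
theorem stable_deltaMCWL_refines_eigenprojection {n : ℕ} {Γ : Type*}
    (M : Matrix (Fin n) (Fin n) ℝ) (hM : M.IsSymm)
    (μ : ℝ) (hμ : Module.End.HasEigenvalue (Matrix.toEuclideanLin M) μ)
    (P : Matrix (Fin n) (Fin n) ℝ)
    (hP : Matrix.toEuclideanLin P =
      ((Module.End.eigenspace (Matrix.toEuclideanLin M) μ).subtypeL.comp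
        (Submodule.orthogonalProjectionOnto
          (Module.End.eigenspace (Matrix.toEuclideanLin M) μ))).toLinearMap)
    (c : Fin n × Fin n → Γ) (hc : IsStableDeltaMCWL c M) :
    Refines c P := by
  have hHerm : M.IsHermitian := by
    ext i j
    simp [Matrix.conjTranspose_apply, hM.apply]
  have hT : (Matrix.toEuclideanLin M).IsSymmetric :=
    Matrix.isHermitian_iff_isSymmetric.mp hHerm
  obtain ⟨f, hf⟩ := proj_eq_aeval (Matrix.toEuclideanLin M) hT μ hμ
  have hPf : P = aeval M f := by
    apply Matrix.toEuclideanLin.injective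
    rw [hP, ← hf, toEuclideanLin_aeval]
  rw [hPf]
  exact refines_aeval c M hc f
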